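/- Let n ≥ 1, let G be an n×n positive semidefinite complex matrix, and let a, b be real numbers such that a·x + b·x² ≤ √x for all real x ≥ 0. Then for every index i, the (real, nonnegative) diagonal entry of the positive semidefinite square root satisfies (√G)_{ii} ≥ a·G_{ii} + b·∑_{j=1}^{n} |G_{ij}|². -/

import Mathlib

open Matrix
open scoped ComplexOrder

/-- The positive semidefinite square root, as `Matrix.PosSemidef.sqrt` was defined in Mathlib (Dec 2024). -/
noncomputable def Matrix.PosSemidef.sqrt {n 𝕜 : Type*} [Fintype n] [DecidableEq n] [RCLike 𝕜]
    {A : Matrix n n 𝕜} (hA : PosSemidef A) : Matrix n n 𝕜 :=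
  hA.1.eigenvectorUnitary.1 * diagonal ((↑) ∘ Real.sqrt ∘ hA.1.eigenvalues) *
    (star hA.1.eigenvectorUnitary : Matrix n n 𝕜)

lemma diag_re_conj (n : ℕ) (U : Matrix (Fin n) (Fin n) ℂ) (d : Fin n → ℝ) (i : Fin n) :
    ((U * Matrix.diagonal (fun k => (d k : ℂ)) * star U) i i).re = ∑ k, d k * ‖U i k‖ ^ 2 := by
  have h : (U * Matrix.diagonal (fun k => (d k : ℂ)) * star U) i i
      = ∑ k, (U i k * (d k : ℂ)) * (starRingEnd ℂ) (U i k) := by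
    rw [Matrix.mul_apply]
    refine Finset.sum_congr rfl fun k _ => ?_
    rw [Matrix.mul_diagonal, Matrix.star_apply]
    rfl
  rw [h, Complex.re_sum]
  refine Finset.sum_congr rfl fun k _ => ?_
  rw [mul_comm (U i k) ((d k : ℂ)), mul_assoc, Complex.mul_conj, ← Complex.ofReal_mul,
    Complex.ofReal_re, Complex.normSq_eq_norm_sq]

theorem stmt_0 (n : ℕ) (hn : 1 ≤ n) (G : Matrix (Fin n) (Fin n) ℂ) (hG : G.PosSemidef)
    (a b : ℝ) (hab : ∀ x : ℝ, 0 ≤ x → a * x + b * x ^ 2 ≤ Real.sqrt x) (i : Fin n) :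
    a * (G i i).re + b * ∑ j, ‖G i j‖ ^ 2 ≤ (hG.sqrt i i).re := by
  set hH := hG.1 with hHdef
  set U : Matrix (Fin n) (Fin n) ℂ := (hH.eigenvectorUnitary : Matrix (Fin n) (Fin n) ℂ) with hU
  set lam := hH.eigenvalues with hlam
  have hUU : star U * U = 1 := Unitary.coe_star_mul_self hH.eigenvectorUnitary
  have hspec : G = U * Matrix.diagonal (fun k => (lam k : ℂ)) * star U := hH.spectral_theorem
  have key : ∀ (D E : Matrix (Fin n) (Fin n) ℂ),
      (U * D * star U) * (U * E * star U) = U * (D * E) * star U := by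
    intro D E
    simp only [Matrix.mul_assoc]
    rw [← Matrix.mul_assoc (star U) U (E * star U), hUU, Matrix.one_mul]
  have hsq : (hG.sqrt i i).re = ∑ k, Real.sqrt (lam k) * ‖U i k‖ ^ 2 := by
    have h : hG.sqrt = U * Matrix.diagonal (fun k => ((Real.sqrt (lam k)) : ℂ)) * star U := rfl
    rw [h, diag_re_conj]
  have hGdiag : (G i i).re = ∑ k, lam k * ‖U i k‖ ^ 2 := by
    conv_lhs => rw [hspec]
    rw [diag_re_conj]
  have hsq2 : G * G = U * Matrix.diagonal (fun k => ((lam k ^ 2 : ℝ) : ℂ)) * star U := by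
    rw [hspec, key, Matrix.diagonal_mul_diagonal]
    congr 2 with k
    push_cast
    ring
  have hsum : ∑ j, ‖G i j‖ ^ 2 = ∑ k, lam k ^ 2 * ‖U i k‖ ^ 2 := by
    have h1 : ((G * G) i i).re = ∑ k, lam k ^ 2 * ‖U i k‖ ^ 2 := by
      rw [hsq2, diag_re_conj (d := fun k => lam k ^ 2)]
    have h2 : (G * G) i i = ∑ j, ((‖G i j‖ ^ 2 : ℝ) : ℂ) := by
      rw [Matrix.mul_apply]
      refine Finset.sum_congr rfl fun j _ => ?_
      have hherm : G j i = (starRingEnd ℂ) (G i j) := by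
        conv_lhs => rw [← hH]
        simp [Matrix.conjTranspose_apply]
      rw [hherm, Complex.mul_conj, Complex.normSq_eq_norm_sq,
        Complex.ofReal_pow]
    rw [← h1, h2, Complex.re_sum]
    exact Finset.sum_congr rfl fun j _ => by rw [Complex.ofReal_re]
  rw [hsq, hGdiag, hsum, Finset.mul_sum, Finset.mul_sum, ← Finset.sum_add_distrib]
  apply Finset.sum_le_sum
  intro k _
  have hl : 0 ≤ lam k := hG.eigenvalues_nonneg k
  have := hab (lam k) hl
  nlinarith [sq_nonneg (‖U i k‖)]
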